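/- arXiv:2509.12498 — 2 statements merged into one kernel-verified Lean document; each statement's English description precedes it below -/
import Mathlib

section
/- If $\{\mathcal{H}_i\}$ is a sequence of real finite-dimensional inner product spaces with isometries $I_{ij}: \mathcal{H}_i \to \mathcal{H}_j$ for $i \le j$ satisfying $I_{ii} = \mathrm{Id}$ and $I_{jk} I_{ij} = I_{ik}$, then the Banach space $\mathcal{H}_\infty = \{ \{h_i\} \in \ell^\infty(\{\mathcal{H}_i\}) : I_{ij}^* h_j = h_i \text{ for all } i < j \}$ with norm $\|\{h_i\}\|_\infty = \sup_i \|h_i\|_i$ satisfies the parallelogram identity, and hence is a Hilbert space. -/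
open RealInnerProductSpace

/-- The projective limit Banach space `ℋ∞` of a projective system dual to an inductive
system of finite-dimensional real inner product spaces with isometric bonding maps
satisfies the parallelogram identity (hence is a Hilbert space). -/
theorem stmt_0
    (H : ℕ → Type*) [∀ i, NormedAddCommGroup (H i)] [∀ i, InnerProductSpace ℝ (H i)]
    [∀ i, FiniteDimensional ℝ (H i)]
    (I : ∀ i j, i ≤ j → H i →L[ℝ] H j)
    (hiso : ∀ i j (h : i ≤ j) (x : H i), ‖I i j h x‖ = ‖x‖)
    (hid : ∀ i (x : H i), I i i le_rfl x = x)
    (hcomp : ∀ i j k (hij : i ≤ j) (hjk : j ≤ k) (x : H i),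
      I j k hjk (I i j hij x) = I i k (hij.trans hjk) x)
    (h g : ∀ i, H i)
    (hhb : BddAbove (Set.range fun i => ‖h i‖))
    (hgb : BddAbove (Set.range fun i => ‖g i‖))
    (hhc : ∀ i j (hij : i ≤ j), ContinuousLinearMap.adjoint (I i j hij) (h j) = h i)
    (hgc : ∀ i j (hij : i ≤ j), ContinuousLinearMap.adjoint (I i j hij) (g j) = g i) :
    (⨆ i, ‖h i + g i‖) ^ 2 + (⨆ i, ‖h i - g i‖) ^ 2
      = 2 * (⨆ i, ‖h i‖) ^ 2 + 2 * (⨆ i, ‖g i‖) ^ 2 := by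
  classical
  -- norm of bonding maps is ≤ 1
  have hnorm : ∀ i j (hij : i ≤ j), ‖I i j hij‖ ≤ 1 := by
    intro i j hij
    refine ContinuousLinearMap.opNorm_le_bound _ zero_le_one (fun x => ?_)
    rw [hiso, one_mul]
  -- monotonicity of norms for compatible sequences
  have key : ∀ (f : ∀ i, H i),
      (∀ i j (hij : i ≤ j), ContinuousLinearMap.adjoint (I i j hij) (f j) = f i) →
      Monotone fun i => ‖f i‖ := by
    intro f hfc i j hij
    calc ‖f i‖ = ‖ContinuousLinearMap.adjoint (I i j hij) (f j)‖ := by rw [hfc]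
    _ ≤ ‖ContinuousLinearMap.adjoint (I i j hij)‖ * ‖f j‖ :=
        ContinuousLinearMap.le_opNorm _ _
    _ ≤ 1 * ‖f j‖ := by
        apply mul_le_mul_of_nonneg_right _ (norm_nonneg _)
        rw [LinearIsometryEquiv.norm_map ContinuousLinearMap.adjoint (I i j hij)]; exact hnorm i j hij
    _ = ‖f j‖ := one_mul _
  -- compatibility of sum/difference
  have haddc : ∀ i j (hij : i ≤ j),
      ContinuousLinearMap.adjoint (I i j hij) (h j + g j) = h i + g i := by
    intro i j hij; rw [map_add, hhc, hgc]
  have hsubc : ∀ i j (hij : i ≤ j),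
      ContinuousLinearMap.adjoint (I i j hij) (h j - g j) = h i - g i := by
    intro i j hij; rw [map_sub, hhc, hgc]
  -- boundedness of sum/difference
  obtain ⟨Ch, hCh⟩ := hhb
  obtain ⟨Cg, hCg⟩ := hgb
  have hCh' : ∀ i, ‖h i‖ ≤ Ch := fun i => hCh ⟨i, rfl⟩
  have hCg' : ∀ i, ‖g i‖ ≤ Cg := fun i => hCg ⟨i, rfl⟩
  have haddb : BddAbove (Set.range fun i => ‖h i + g i‖) := by
    refine ⟨Ch + Cg, ?_⟩
    rintro x ⟨i, rfl⟩
    exact (norm_add_le _ _).trans (add_le_add (hCh' i) (hCg' i))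
  have hsubb : BddAbove (Set.range fun i => ‖h i - g i‖) := by
    refine ⟨Ch + Cg, ?_⟩
    rintro x ⟨i, rfl⟩
    exact (norm_sub_le _ _).trans (add_le_add (hCh' i) (hCg' i))
  -- sup = limit for monotone bounded sequences
  have lim1 : Filter.Tendsto (fun i => ‖h i + g i‖) Filter.atTop
      (nhds (⨆ i, ‖h i + g i‖)) := tendsto_atTop_ciSup (key _ haddc) haddb
  have lim2 : Filter.Tendsto (fun i => ‖h i - g i‖) Filter.atTop
      (nhds (⨆ i, ‖h i - g i‖)) := tendsto_atTop_ciSup (key _ hsubc) hsubb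
  have lim3 : Filter.Tendsto (fun i => ‖h i‖) Filter.atTop
      (nhds (⨆ i, ‖h i‖)) := tendsto_atTop_ciSup (key _ hhc) ⟨Ch, hCh⟩
  have lim4 : Filter.Tendsto (fun i => ‖g i‖) Filter.atTop
      (nhds (⨆ i, ‖g i‖)) := tendsto_atTop_ciSup (key _ hgc) ⟨Cg, hCg⟩
  have L : Filter.Tendsto (fun i => ‖h i + g i‖ ^ 2 + ‖h i - g i‖ ^ 2) Filter.atTop
      (nhds ((⨆ i, ‖h i + g i‖) ^ 2 + (⨆ i, ‖h i - g i‖) ^ 2)) :=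
    ((lim1.pow 2).add (lim2.pow 2))
  have R : Filter.Tendsto (fun i => 2 * ‖h i‖ ^ 2 + 2 * ‖g i‖ ^ 2) Filter.atTop
      (nhds (2 * (⨆ i, ‖h i‖) ^ 2 + 2 * (⨆ i, ‖g i‖) ^ 2)) :=
    (((lim3.pow 2).const_mul 2).add ((lim4.pow 2).const_mul 2))
  have heq : (fun i => ‖h i + g i‖ ^ 2 + ‖h i - g i‖ ^ 2)
      = fun i => 2 * ‖h i‖ ^ 2 + 2 * ‖g i‖ ^ 2 := by
    funext i
    have := parallelogram_law_with_norm ℝ (h i) (g i)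
    ring_nf
    ring_nf at this
    linarith
  rw [heq] at L
  exact tendsto_nhds_unique L R
end

section
/- Let $(\mathcal{H}_i, I_{ij})$ be an inductive system of real finite-dimensional Hilbert spaces with isometric bonding maps, with inductive/projective limit Hilbert space $\mathcal{H}_\infty$, isometries $I_i: \mathcal{H}_i \to \mathcal{H}_\infty$ and contractions $P_i = I_i^*: \mathcal{H}_\infty \to \mathcal{H}_i$ satisfying $P_i I_i = \mathrm{Id}$ and $\bigcup_i \mathrm{Im}\, I_i$ dense in $\mathcal{H}_\infty$. Let $f_i: \mathcal{H}_i \to \mathbb{C}$ be continuous functions with $f_i = f_j \circ I_{ij}$ for all $j > i$, such that the functions $f_i \circ P_i: \mathcal{H}_\infty \to \mathbb{C}$ are equicontinuous and pointwise uniformly bounded. Then there exists a unique continuous $f_\infty: \mathcal{H}_\infty \to \mathbb{C}$ with $f_i = f_\infty \circ I_i$ for all $i$. -/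
open RealInnerProductSpace

/-- Lemma 2.1 of the paper: given an inductive system of finite-dimensional real Hilbert
spaces with isometric bonding maps, limit space `ℋ∞`, isometries `Iᵢ : ℋᵢ → ℋ∞` and
contractions `Pᵢ = Iᵢ^*` with `Pᵢ Iᵢ = Id` and `⋃ᵢ Im Iᵢ` dense, and continuous
`fᵢ : ℋᵢ → ℂ` with `fᵢ = fⱼ ∘ I_{ij}` such that the `fᵢ ∘ Pᵢ` are equicontinuous and
pointwise uniformly bounded, there is a unique continuous `f∞ : ℋ∞ → ℂ` with
`fᵢ = f∞ ∘ Iᵢ` for all `i`. -/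
theorem stmt_8
    (H : ℕ → Type*) [∀ i, NormedAddCommGroup (H i)] [∀ i, InnerProductSpace ℝ (H i)]
    [∀ i, FiniteDimensional ℝ (H i)]
    (Hinf : Type*) [NormedAddCommGroup Hinf] [InnerProductSpace ℝ Hinf] [CompleteSpace Hinf]
    (Iij : ∀ i j, i ≤ j → H i →L[ℝ] H j)
    (hIij : ∀ i j (h : i ≤ j) (x : H i), ‖Iij i j h x‖ = ‖x‖)
    (Ii : ∀ i, H i →L[ℝ] Hinf)
    (hIi : ∀ i (x : H i), ‖Ii i x‖ = ‖x‖)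
    (hcompat : ∀ i j (h : i ≤ j) (x : H i), Ii j (Iij i j h x) = Ii i x)
    (hPI : ∀ i (x : H i), ContinuousLinearMap.adjoint (Ii i) (Ii i x) = x)
    (hdense : Dense (⋃ i, Set.range (Ii i)))
    (f : ∀ i, H i → ℂ) (hfc : ∀ i, Continuous (f i))
    (hcons : ∀ i j (h : i ≤ j) (x : H i), f i x = f j (Iij i j h x))
    (hequi : Equicontinuous fun i (x : Hinf) => f i (ContinuousLinearMap.adjoint (Ii i) x))
    (hbd : ∀ x : Hinf,
      BddAbove (Set.range fun i => ‖f i (ContinuousLinearMap.adjoint (Ii i) x)‖)) :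
    ∃! finf : Hinf → ℂ, Continuous finf ∧ ∀ i (x : H i), finf (Ii i x) = f i x := by
  set g : ℕ → Hinf → ℂ := fun i x => f i (ContinuousLinearMap.adjoint (Ii i) x) with hg
  -- key: for j ≥ i, g j (Ii i x) = f i x
  have key : ∀ i (x : H i) j, i ≤ j → g j (Ii i x) = f i x := by
    intro i x j hij
    have : (Ii i) x = (Ii j) (Iij i j hij x) := (hcompat i j hij x).symm
    rw [hg]
    simp only [this, hPI j]
    exact (hcons i j hij x).symm
  -- g n y is eventually constant for y in the union, hence Cauchy there
  have cauchy_union : ∀ y ∈ ⋃ i, Set.range (Ii i), CauchySeq fun n => g n y := by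
    rintro y hy
    obtain ⟨_, ⟨i, rfl⟩, x, rfl⟩ := hy
    apply Filter.Tendsto.cauchySeq (x := f i x)
    apply Filter.Tendsto.congr' (f₁ := fun _ => f i x) _ tendsto_const_nhds
    filter_upwards [Filter.eventually_ge_atTop i] with j hj
    exact (key i x j hj).symm
  -- Cauchy everywhere
  have cauchy_all : ∀ x : Hinf, CauchySeq fun n => g n x := by
    intro x
    rw [Metric.cauchySeq_iff]
    intro ε hε
    obtain ⟨δ, hδ, hU⟩ := (Metric.equicontinuousAt_iff.mp (hequi x)) (ε/3) (by linarith)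
    obtain ⟨y, hyU, hymem⟩ := Metric.dense_iff.mp hdense x δ hδ
    have hdxy : ∀ n, dist (g n x) (g n y) < ε/3 := fun n =>
      hU y (Metric.mem_ball.mp hyU) n
    obtain ⟨N, hN⟩ := Metric.cauchySeq_iff.mp (cauchy_union y hymem) (ε/3) (by linarith)
    refine ⟨N, fun m hm n hn => ?_⟩
    calc dist (g m x) (g n x) ≤ dist (g m x) (g m y) + dist (g m y) (g n y) + dist (g n y) (g n x) :=
          dist_triangle4 _ _ _ _
      _ < ε/3 + ε/3 + ε/3 := by
          gcongr
          · exact hdxy m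
          · exact hN m hm n hn
          · rw [dist_comm]; exact hdxy n
      _ = ε := by ring
  -- define the limit
  have hlim : ∀ x : Hinf, ∃ l : ℂ, Filter.Tendsto (fun n => g n x) Filter.atTop (nhds l) :=
    fun x => cauchySeq_tendsto_of_complete (cauchy_all x)
  choose finf hfinf using hlim
  have hval : ∀ i (x : H i), finf (Ii i x) = f i x := by
    intro i x
    have h1 : Filter.Tendsto (fun n => g n (Ii i x)) Filter.atTop (nhds (f i x)) := by
      apply Filter.Tendsto.congr' (f₁ := fun _ => f i x) _ tendsto_const_nhds
      filter_upwards [Filter.eventually_ge_atTop i] with j hj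
      exact (key i x j hj).symm
    exact tendsto_nhds_unique (hfinf (Ii i x)) h1
  have hcont : Continuous finf := by
    rw [Metric.continuous_iff]
    intro x ε hε
    obtain ⟨δ, hδ, hU⟩ := (Metric.equicontinuousAt_iff.mp (hequi x)) (ε/2) (by linarith)
    refine ⟨δ, hδ, fun y hy => ?_⟩
    have : Filter.Tendsto (fun n => dist (g n y) (g n x)) Filter.atTop
        (nhds (dist (finf y) (finf x))) :=
      Filter.Tendsto.dist (hfinf y) (hfinf x)
    have hle : dist (finf y) (finf x) ≤ ε/2 :=
      le_of_tendsto this (Filter.Eventually.of_forall fun n =>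
        le_of_lt (by rw [dist_comm]; exact hU y hy n))
    linarith
  refine ⟨finf, ⟨hcont, hval⟩, ?_⟩
  rintro G ⟨hGc, hGval⟩
  apply Continuous.ext_on hdense hGc hcont
  rintro y ⟨_, ⟨i, rfl⟩, x, rfl⟩
  rw [hGval i x, hval i x]
end
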